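/- For every p ≥ 1 and all x, y ∈ [0,1]^p with x + y ≠ 0, Δ_DML1(x,y) = Δ_JML1(x,y) / (2 − Δ_JML1(x,y)) and Δ_DML2(x,y) = Δ_JML2(x,y) / (2 − Δ_JML2(x,y)). -/

import Mathlib

open Finset

/-- The L¹ norm of a vector. -/
noncomputable def l1 {p : ℕ} (z : Fin p → ℝ) : ℝ := ∑ i, |z i|

/-- The first Dice semimetric loss. -/
noncomputable def DML1 {p : ℕ} (x y : Fin p → ℝ) : ℝ :=
  1 - (l1 (x + y) - l1 (x - y)) / l1 (x + y)

/-- The second Dice semimetric loss. -/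
noncomputable def DML2 {p : ℕ} (x y : Fin p → ℝ) : ℝ :=
  1 - 2 * l1 (x * y) / (2 * l1 (x * y) + l1 (x - y))

/-- The first Jaccard metric loss. -/
noncomputable def JML1 {p : ℕ} (x y : Fin p → ℝ) : ℝ :=
  1 - (l1 (x + y) - l1 (x - y)) / (l1 (x + y) + l1 (x - y))

/-- The second Jaccard metric loss. -/
noncomputable def JML2 {p : ℕ} (x y : Fin p → ℝ) : ℝ :=
  1 - l1 (x * y) / (l1 (x * y) + l1 (x - y))

lemma l1_nonneg {p : ℕ} (z : Fin p → ℝ) : 0 ≤ l1 z :=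
  Finset.sum_nonneg fun i _ => abs_nonneg _

lemma l1_pos {p : ℕ} {z : Fin p → ℝ} (hz : z ≠ 0) : 0 < l1 z := by
  obtain ⟨i, hi⟩ := Function.ne_iff.mp hz
  exact Finset.sum_pos' (fun j _ => abs_nonneg _)
    ⟨i, Finset.mem_univ i, abs_pos.mpr hi⟩

lemma l1_eq_zero {p : ℕ} {z : Fin p → ℝ} (h : l1 z = 0) : z = 0 := by
  by_contra hz
  exact absurd h (l1_pos hz).ne'

theorem dml_eq_jml_transform {p : ℕ} (hp : 1 ≤ p) (x y : Fin p → ℝ)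
    (hx : ∀ i, 0 ≤ x i ∧ x i ≤ 1) (hy : ∀ i, 0 ≤ y i ∧ y i ≤ 1)
    (hxy0 : x + y ≠ 0) :
    DML1 x y = JML1 x y / (2 - JML1 x y) ∧
    DML2 x y = JML2 x y / (2 - JML2 x y) := by
  set A := l1 (x + y) with hA
  set B := l1 (x - y) with hB
  set M := l1 (x * y) with hM
  have hApos : 0 < A := l1_pos hxy0
  have hBnn : 0 ≤ B := l1_nonneg _
  have hMnn : 0 ≤ M := l1_nonneg _
  have hMB : 0 < M + B := by
    rcases lt_or_eq_of_le hBnn with h | h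
    · linarith
    rcases lt_or_eq_of_le hMnn with h' | h'
    · linarith
    -- B = 0 and M = 0: contradiction
    exfalso
    have hxy : x = y := by
      have := l1_eq_zero h.symm
      funext i
      have := congrFun this i
      simp at this
      linarith [this]
    have hxx : x * y = 0 := l1_eq_zero h'.symm
    apply hxy0
    funext i
    have h1 : x i * y i = 0 := congrFun hxx i
    have h2 : x i = y i := congrFun hxy i
    have : x i = 0 := by
      rcases mul_eq_zero.mp h1 with h3 | h3
      · exact h3
      · rw [h2]; exact h3
    simp [this, ← h2, Pi.add_apply]
  have hABpos : 0 < A + B := by linarith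
  constructor
  · have h1 : JML1 x y = 2 * B / (A + B) := by
      unfold JML1
      rw [← hA, ← hB]
      field_simp
      ring
    have h2 : DML1 x y = B / A := by
      unfold DML1
      rw [← hA, ← hB]
      field_simp
      ring
    rw [h1, h2]
    rw [div_eq_div_iff hApos.ne' (by
      rw [sub_ne_zero]
      intro h
      have : 2 * (A + B) = 2 * B := by
        field_simp at h
        linarith
      linarith)]
    field_simp
    ring
  · have h1 : JML2 x y = B / (M + B) := by
      unfold JML2
      rw [← hM, ← hB]
      field_simp
      ring
    have h2 : DML2 x y = B / (2 * M + B) := by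
      unfold DML2
      rw [← hM, ← hB]
      have : 2 * M + B ≠ 0 := by linarith
      field_simp
      ring
    rw [h1, h2]
    rw [div_eq_div_iff (by linarith) (by
      rw [sub_ne_zero]
      intro h
      have : 2 * (M + B) = B := by
        field_simp at h
        linarith
      linarith)]
    field_simp
    ring
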